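/- Let R be a commutative ring with identity, I a proper ideal of R, and p a prime ideal of R that is minimal over I. If the ideal p/I of the quotient ring R/I is finitely generated, then p is an associated prime of the R-module R/I. -/

import Mathlib

/-- Auxiliary: a finitely generated minimal prime of a nontrivial commutative ring is
the annihilator of some nonzero element. -/
lemma aux_minimalPrime_ann {A : Type*} [CommRing A] [Nontrivial A]
    (q : Ideal A) (hqmin : q ∈ minimalPrimes A) (hfg : q.FG) :
    ∃ x : A, ∀ a : A, a * x = 0 ↔ a ∈ q := by
  haveI hqprime : q.IsPrime := hqmin.1.1
  classical
  set L := Localization q.primeCompl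
  set f := algebraMap A L with hf
  have hker : ∀ a : A, f a = 0 ↔ ∃ s : q.primeCompl, (s : A) * a = 0 := fun a =>
    IsLocalization.map_eq_zero_iff q.primeCompl L a
  have hunit : ∀ a : A, a ∉ q → IsUnit (f a) := fun a ha =>
    IsLocalization.map_units L (⟨a, ha⟩ : q.primeCompl)
  -- q is contained in the radical of the kernel of f
  have hrad : q ≤ (RingHom.ker f).radical := by
    intro a ha
    have hmax : f a ∈ IsLocalRing.maximalIdeal L :=
      (IsLocalization.AtPrime.to_map_mem_maximal_iff L q a).mpr ha
    have hnil : IsNilpotent (f a) := by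
      haveI := IsLocalization.subsingleton_primeSpectrum_of_mem_minimalPrimes q hqmin L
      refine nilpotent_iff_mem_prime.mpr fun J hJ => ?_
      have hJe := congrArg PrimeSpectrum.asIdeal (Subsingleton.elim (⟨J, hJ⟩ : PrimeSpectrum L)
        ⟨_, (IsLocalRing.maximalIdeal.isMaximal L).isPrime⟩)
      have hJe' : J = IsLocalRing.maximalIdeal L := hJe
      rw [hJe']; exact hmax
    obtain ⟨k, hk⟩ := hnil
    exact ⟨k, by rwa [RingHom.mem_ker, map_pow]⟩
  obtain ⟨N, hN⟩ := Ideal.exists_pow_le_of_le_radical_of_fg hrad hfg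
  -- take the minimal such power
  have hex : ∃ n, q ^ n ≤ RingHom.ker f := ⟨N, hN⟩
  set n := Nat.find hex with hn
  have hnle : q ^ n ≤ RingHom.ker f := Nat.find_spec hex
  have hnpos : n ≠ 0 := by
    intro h0
    have : (1 : A) ∈ q ^ n := by rw [h0, pow_zero, Ideal.one_eq_top]; exact Submodule.mem_top
    have h1 : f 1 = 0 := hnle this
    rw [map_one] at h1
    exact one_ne_zero h1
  obtain ⟨m, hm⟩ := Nat.exists_eq_succ_of_ne_zero hnpos
  have hmlt : ¬ q ^ m ≤ RingHom.ker f := Nat.find_min hex (by omega)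
  obtain ⟨y, hy, hyk⟩ : ∃ y ∈ q ^ m, y ∉ RingHom.ker f := by
    by_contra h
    push_neg at h
    exact hmlt h
  have hfy : f y ≠ 0 := fun h => hyk (by rwa [RingHom.mem_ker])
  -- generators of q
  obtain ⟨s, hs⟩ := hfg
  -- for each generator g, g * y is in q ^ n, hence killed by some element outside q
  have hgy : ∀ g ∈ s, ∃ c : q.primeCompl, (c : A) * (g * y) = 0 := by
    intro g hg
    have hgq : g ∈ q := hs ▸ Ideal.subset_span hg
    have : g * y ∈ q ^ n := by
      rw [hm, pow_succ']
      exact Ideal.mul_mem_mul hgq hy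
    have := hnle this
    rw [RingHom.mem_ker, hker] at this
    exact this
  choose c hc using hgy
  -- the product of the chosen elements
  set t : A := ∏ g ∈ s.attach, (c g.1 g.2 : A) with ht
  have htq : t ∉ q := by
    have : t ∈ q.primeCompl := Submonoid.prod_mem _ (fun g _ => (c g.1 g.2).2)
    exact this
  set x : A := t * y with hx
  refine ⟨x, fun a => ⟨fun hax => ?_, fun haq => ?_⟩⟩
  · -- a * x = 0 → a ∈ q
    by_contra ha
    have hu : IsUnit (f a) := hunit a ha
    have hut : IsUnit (f t) := hunit t htq
    have h0 : f (a * x) = 0 := by rw [hax, map_zero]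
    rw [hx, ← mul_assoc, map_mul, map_mul, mul_assoc] at h0
    have h2 : f t * f y = 0 := (hu.mul_right_eq_zero).mp h0
    exact hfy ((hut.mul_right_eq_zero).mp h2)
  · -- a ∈ q → a * x = 0
    -- first show it for generators
    have hgen : ∀ g ∈ s, g * x = 0 := by
      intro g hg
      have hgmem : (⟨g, hg⟩ : {z // z ∈ s}) ∈ s.attach := Finset.mem_attach _ _
      have hsplit : (c g hg : A) * ∏ z ∈ s.attach.erase ⟨g, hg⟩, (c z.1 z.2 : A) = t :=
        Finset.mul_prod_erase s.attach (fun z => (c z.1 z.2 : A)) hgmem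
      have : g * x = (∏ z ∈ s.attach.erase ⟨g, hg⟩, (c z.1 z.2 : A)) * ((c g hg : A) * (g * y)) := by
        rw [hx, ← hsplit]; ring
      rw [this, hc g hg, mul_zero]
    -- extend to all of q by span induction
    have hspan : a ∈ Ideal.span (s : Set A) := by rwa [hs]
    refine Submodule.span_induction (p := fun z _ => z * x = 0) ?_ ?_ ?_ ?_ hspan
    · intro z hz; exact hgen z hz
    · simp
    · intro z w _ _ hz hw; rw [add_mul, hz, hw, add_zero]
    · intro r z _ hz; rw [smul_eq_mul, mul_assoc, hz, mul_zero]

/-- Let `R` be a commutative ring, `I` a proper ideal of `R`, and `p` a prime ideal minimal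
over `I`. If the ideal `p/I` of `R ⧸ I` is finitely generated, then `p` is an associated
prime of the `R`-module `R ⧸ I`. -/
theorem minimalPrime_mem_associatedPrimes_of_fg {R : Type*} [CommRing R]
    (I : Ideal R) (hI : I ≠ ⊤) (p : Ideal R) (hp : p ∈ I.minimalPrimes)
    (hfg : (p.map (Ideal.Quotient.mk I)).FG) :
    p ∈ associatedPrimes R (R ⧸ I) := by
  haveI : Nontrivial (R ⧸ I) := Ideal.Quotient.nontrivial_iff.mpr hI
  let mk := Ideal.Quotient.mk I
  obtain ⟨q, hqmin, hqp⟩ : ∃ q ∈ minimalPrimes (R ⧸ I), q.comap mk = p := by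
    rw [Ideal.minimalPrimes_eq_comap] at hp
    obtain ⟨q, hq, hq'⟩ := hp
    exact ⟨q, hq, hq'⟩
  have hqI : p.map mk = q := by
    rw [← hqp, Ideal.map_comap_of_surjective mk Ideal.Quotient.mk_surjective]
  rw [hqI] at hfg
  obtain ⟨x, hx⟩ := aux_minimalPrime_ann q hqmin hfg
  refine ⟨hp.1.1, x, ?_⟩
  suffices hcol : p = (⊥ : Submodule R (R ⧸ I)).colon {x} by
    rw [← hcol, hp.1.1.radical]
  ext r
  rw [Submodule.mem_colon_singleton, Submodule.mem_bot]
  have hsmul : r • x = Ideal.Quotient.mk I r * x := by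
    rw [Algebra.smul_def, Ideal.Quotient.algebraMap_eq]
  rw [hsmul, hx]
  rw [← hqp, Ideal.mem_comap]
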